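/- For the matrix g(ρ,z) = M·diag(μ⁺, μ⁻)·M^T where μ^± = √(ρ² + (z-a)²) ∓ (z-a) and M is a constant invertible 2×2 matrix with det M = β̂, one has det g = β̂² ρ², and J := g^{-1} dg satisfies the equation ∂_ρ(ρ J_ρ) + ∂_z(ρ J_z) = 0 for ρ > 0. -/

import Mathlib

open Matrix

attribute [local instance] Matrix.normedAddCommGroup Matrix.normedSpace

/-- `g(ρ,z) = M diag(μ⁺, μ⁻) Mᵀ`, `μ^± = √(ρ² + (z-a)²) ∓ (z-a)`. -/
noncomputable def rodGram (M : Matrix (Fin 2) (Fin 2) ℝ) (a : ℝ) (ρ z : ℝ) :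
    Matrix (Fin 2) (Fin 2) ℝ :=
  M * Matrix.diagonal ![Real.sqrt (ρ ^ 2 + (z - a) ^ 2) - (z - a),
      Real.sqrt (ρ ^ 2 + (z - a) ^ 2) + (z - a)] * Mᵀ

namespace Stmt14Aux

/-- The sandwich map `X ↦ A X B` as a continuous linear map. -/
noncomputable def sand (A B : Matrix (Fin 2) (Fin 2) ℝ) :
    Matrix (Fin 2) (Fin 2) ℝ →L[ℝ] Matrix (Fin 2) (Fin 2) ℝ :=
  LinearMap.toContinuousLinearMap
    { toFun := fun X => A * X * B
      map_add' := fun X Y => by simp [Matrix.mul_add, Matrix.add_mul]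
      map_smul' := fun c X => by simp [Matrix.mul_smul, Matrix.smul_mul] }

lemma sand_apply (A B X : Matrix (Fin 2) (Fin 2) ℝ) : sand A B X = A * X * B := rfl

lemma diag2 (x y : ℝ) :
    Matrix.diagonal ![x, y]
      = x • Matrix.diagonal ![(1:ℝ), 0] + y • Matrix.diagonal ![(0:ℝ), 1] := by
  ext i j
  fin_cases i <;> fin_cases j <;> simp [Matrix.diagonal]

lemma hasDerivAt_diag {f g : ℝ → ℝ} {f' g' : ℝ} {s : ℝ}
    (hf : HasDerivAt f f' s) (hg : HasDerivAt g g' s) :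
    HasDerivAt (fun u => Matrix.diagonal ![f u, g u]) (Matrix.diagonal ![f', g']) s := by
  have h := (hf.smul_const (Matrix.diagonal ![(1:ℝ), 0])).add
    (hg.smul_const (Matrix.diagonal ![(0:ℝ), 1]))
  simp only [Pi.add_def, ← diag2] at h
  exact h

lemma hasDerivAt_sandDiag (A B : Matrix (Fin 2) (Fin 2) ℝ) {f g : ℝ → ℝ} {f' g' : ℝ} {s : ℝ}
    (hf : HasDerivAt f f' s) (hg : HasDerivAt g g' s) :
    HasDerivAt (fun u => A * Matrix.diagonal ![f u, g u] * B)
      (A * Matrix.diagonal ![f', g'] * B) s := by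
  have h := (sand A B).hasFDerivAt.comp_hasDerivAt s (hasDerivAt_diag hf hg)
  simp [sand_apply, Function.comp_def] at h
  exact h

lemma hasDerivAt_sqrt_sq_add {c s : ℝ} (h : 0 < s ^ 2 + c ^ 2) :
    HasDerivAt (fun u : ℝ => Real.sqrt (u ^ 2 + c ^ 2))
      (s / Real.sqrt (s ^ 2 + c ^ 2)) s := by
  have h1 : HasDerivAt (fun u : ℝ => u ^ 2 + c ^ 2) (2 * s) s := by
    simpa [mul_comm] using (hasDerivAt_pow 2 s).add_const (c ^ 2)
  have h2 := (Real.hasDerivAt_sqrt h.ne').comp s h1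
  have hs : Real.sqrt (s ^ 2 + c ^ 2) ≠ 0 := by positivity
  refine h2.congr_deriv ?_
  field_simp

lemma hasDerivAt_sqrt_add_sq {c a t : ℝ} (h : 0 < c ^ 2 + (t - a) ^ 2) :
    HasDerivAt (fun u : ℝ => Real.sqrt (c ^ 2 + (u - a) ^ 2))
      ((t - a) / Real.sqrt (c ^ 2 + (t - a) ^ 2)) t := by
  have h1 : HasDerivAt (fun u : ℝ => c ^ 2 + (u - a) ^ 2) (2 * (t - a)) t := by
    have : HasDerivAt (fun u : ℝ => (u - a) ^ 2) (2 * (t - a) ^ 1 * 1) t :=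
      ((hasDerivAt_id t).sub_const a).pow 2
    simpa [mul_comm] using this.const_add (c ^ 2)
  have h2 := (Real.hasDerivAt_sqrt h.ne').comp t h1
  have hs : Real.sqrt (c ^ 2 + (t - a) ^ 2) ≠ 0 := by positivity
  refine h2.congr_deriv ?_
  field_simp

section
variable (M : Matrix (Fin 2) (Fin 2) ℝ) (a z : ℝ)

/-- ρ-derivative of `rodGram`. -/
lemma hasDerivAt_rodGram_rho {s : ℝ} (h : 0 < s ^ 2 + (z - a) ^ 2) :
    HasDerivAt (fun s' => rodGram M a s' z)
      (M * Matrix.diagonal ![s / Real.sqrt (s ^ 2 + (z - a) ^ 2),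
        s / Real.sqrt (s ^ 2 + (z - a) ^ 2)] * Mᵀ) s := by
  have hr := hasDerivAt_sqrt_sq_add (c := z - a) h
  exact hasDerivAt_sandDiag M Mᵀ (hr.sub_const (z - a)) (hr.add_const (z - a))

/-- z-derivative of `rodGram`. -/
lemma hasDerivAt_rodGram_z {ρ t : ℝ} (h : 0 < ρ ^ 2 + (t - a) ^ 2) :
    HasDerivAt (fun t' => rodGram M a ρ t')
      (M * Matrix.diagonal ![(t - a) / Real.sqrt (ρ ^ 2 + (t - a) ^ 2) - 1,
        (t - a) / Real.sqrt (ρ ^ 2 + (t - a) ^ 2) + 1] * Mᵀ) t := by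
  have hr := hasDerivAt_sqrt_add_sq (c := ρ) (a := a) h
  have hid : HasDerivAt (fun u : ℝ => u - a) 1 t := (hasDerivAt_id t).sub_const a
  exact hasDerivAt_sandDiag M Mᵀ (hr.sub hid) (hr.add hid)

/-- Explicit inverse of `rodGram`. -/
lemma rodGram_inv (hM : IsUnit M.det) {s : ℝ}
    (h1 : Real.sqrt (s ^ 2 + (z - a) ^ 2) - (z - a) ≠ 0)
    (h2 : Real.sqrt (s ^ 2 + (z - a) ^ 2) + (z - a) ≠ 0) :
    (rodGram M a s z)⁻¹
      = Mᵀ⁻¹ * Matrix.diagonal ![(Real.sqrt (s ^ 2 + (z - a) ^ 2) - (z - a))⁻¹,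
          (Real.sqrt (s ^ 2 + (z - a) ^ 2) + (z - a))⁻¹] * M⁻¹ := by
  have hMT : IsUnit (Mᵀ).det := by rwa [Matrix.det_transpose]
  apply Matrix.inv_eq_right_inv
  have hDD : Matrix.diagonal ![Real.sqrt (s ^ 2 + (z - a) ^ 2) - (z - a),
        Real.sqrt (s ^ 2 + (z - a) ^ 2) + (z - a)]
      * Matrix.diagonal ![(Real.sqrt (s ^ 2 + (z - a) ^ 2) - (z - a))⁻¹,
        (Real.sqrt (s ^ 2 + (z - a) ^ 2) + (z - a))⁻¹] = 1 := by
    rw [Matrix.diagonal_mul_diagonal]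
    ext i j
    fin_cases i <;> fin_cases j <;>
      simp [Matrix.diagonal, Matrix.one_apply, mul_inv_cancel₀ h1, mul_inv_cancel₀ h2]
  rw [rodGram]
  calc M * Matrix.diagonal ![Real.sqrt (s ^ 2 + (z - a) ^ 2) - (z - a),
        Real.sqrt (s ^ 2 + (z - a) ^ 2) + (z - a)] * Mᵀ
      * (Mᵀ⁻¹ * Matrix.diagonal ![(Real.sqrt (s ^ 2 + (z - a) ^ 2) - (z - a))⁻¹,
          (Real.sqrt (s ^ 2 + (z - a) ^ 2) + (z - a))⁻¹] * M⁻¹)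
      = M * (Matrix.diagonal ![Real.sqrt (s ^ 2 + (z - a) ^ 2) - (z - a),
          Real.sqrt (s ^ 2 + (z - a) ^ 2) + (z - a)]
        * (Mᵀ * (Mᵀ⁻¹ * (Matrix.diagonal ![(Real.sqrt (s ^ 2 + (z - a) ^ 2) - (z - a))⁻¹,
          (Real.sqrt (s ^ 2 + (z - a) ^ 2) + (z - a))⁻¹] * M⁻¹)))) := by
        simp only [Matrix.mul_assoc]
    _ = 1 := by
        rw [Matrix.mul_nonsing_inv_cancel_left _ _ hMT, ← Matrix.mul_assoc _ _ M⁻¹, hDD,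
          one_mul, Matrix.mul_nonsing_inv _ hM]

/-- Pointwise formula for `ρ J_ρ` (valid for `s > 0`). -/
lemma F_eq (hM : IsUnit M.det) {s : ℝ} (hs : 0 < s) :
    s • ((rodGram M a s z)⁻¹ * deriv (fun s' => rodGram M a s' z) s)
      = Mᵀ⁻¹ * Matrix.diagonal
          ![1 + (z - a) * (Real.sqrt (s ^ 2 + (z - a) ^ 2))⁻¹,
            1 - (z - a) * (Real.sqrt (s ^ 2 + (z - a) ^ 2))⁻¹] * Mᵀ := by
  have hq : 0 < s ^ 2 + (z - a) ^ 2 := by positivity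
  set w := z - a with hw
  set R := Real.sqrt (s ^ 2 + w ^ 2) with hRdef
  have hRpos : 0 < R := Real.sqrt_pos.mpr hq
  have hR2 : R ^ 2 = s ^ 2 + w ^ 2 := Real.sq_sqrt hq.le
  have habs : |w| < R := by nlinarith [sq_abs w, abs_nonneg w]
  have hp : 0 < R - w := by have := le_abs_self w; linarith
  have hm : 0 < R + w := by have := neg_abs_le w; linarith
  erw [(hasDerivAt_rodGram_rho M a z hq).deriv, rodGram_inv M a z hM hp.ne' hm.ne']
  have key : (Mᵀ⁻¹ * Matrix.diagonal ![(R - w)⁻¹, (R + w)⁻¹] * M⁻¹)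
        * (M * Matrix.diagonal ![s / R, s / R] * Mᵀ)
      = Mᵀ⁻¹ * (Matrix.diagonal ![(R - w)⁻¹, (R + w)⁻¹] * Matrix.diagonal ![s / R, s / R])
        * Mᵀ := by
    simp only [Matrix.mul_assoc, Matrix.nonsing_inv_mul_cancel_left _ _ hM]
  rw [key,
    show s • (Mᵀ⁻¹ * (Matrix.diagonal ![(R - w)⁻¹, (R + w)⁻¹]
        * Matrix.diagonal ![s / R, s / R]) * Mᵀ)
      = Mᵀ⁻¹ * (s • (Matrix.diagonal ![(R - w)⁻¹, (R + w)⁻¹]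
        * Matrix.diagonal ![s / R, s / R])) * Mᵀ from by
      rw [Matrix.mul_smul, Matrix.smul_mul]]
  congr 2
  ext i j
  fin_cases i <;> fin_cases j <;>
    simp [Matrix.mul_apply, Fin.sum_univ_two, Matrix.diagonal, Matrix.smul_apply, smul_eq_mul]
  · field_simp
    linear_combination (-1) * hR2 + (-1) * (w + z - a) * hw
  · field_simp
    linear_combination (-1) * hR2 + (-1) * (w + z - a) * hw

/-- Pointwise formula for `ρ J_z` (valid for `ρ > 0`, all `t`). -/
lemma G_eq (hM : IsUnit M.det) {ρ : ℝ} (hρ : 0 < ρ) (t : ℝ) :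
    ρ • ((rodGram M a ρ t)⁻¹ * deriv (fun t' => rodGram M a ρ t') t)
      = Mᵀ⁻¹ * Matrix.diagonal
          ![-(ρ * (Real.sqrt (ρ ^ 2 + (t - a) ^ 2))⁻¹),
            ρ * (Real.sqrt (ρ ^ 2 + (t - a) ^ 2))⁻¹] * Mᵀ := by
  have hq : 0 < ρ ^ 2 + (t - a) ^ 2 := by positivity
  set w := t - a with hw
  set R := Real.sqrt (ρ ^ 2 + w ^ 2) with hRdef
  have hRpos : 0 < R := Real.sqrt_pos.mpr hq
  have hR2 : R ^ 2 = ρ ^ 2 + w ^ 2 := Real.sq_sqrt hq.le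
  have habs : |w| < R := by nlinarith [sq_abs w, abs_nonneg w]
  have hp : 0 < R - w := by have := le_abs_self w; linarith
  have hm : 0 < R + w := by have := neg_abs_le w; linarith
  erw [(hasDerivAt_rodGram_z M a hq).deriv, rodGram_inv M a t hM hp.ne' hm.ne']
  have key : (Mᵀ⁻¹ * Matrix.diagonal ![(R - w)⁻¹, (R + w)⁻¹] * M⁻¹)
        * (M * Matrix.diagonal ![w / R - 1, w / R + 1] * Mᵀ)
      = Mᵀ⁻¹ * (Matrix.diagonal ![(R - w)⁻¹, (R + w)⁻¹]
        * Matrix.diagonal ![w / R - 1, w / R + 1]) * Mᵀ := by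
    simp only [Matrix.mul_assoc, Matrix.nonsing_inv_mul_cancel_left _ _ hM]
  rw [key,
    show ρ • (Mᵀ⁻¹ * (Matrix.diagonal ![(R - w)⁻¹, (R + w)⁻¹]
        * Matrix.diagonal ![w / R - 1, w / R + 1]) * Mᵀ)
      = Mᵀ⁻¹ * (ρ • (Matrix.diagonal ![(R - w)⁻¹, (R + w)⁻¹]
        * Matrix.diagonal ![w / R - 1, w / R + 1])) * Mᵀ from by
      rw [Matrix.mul_smul, Matrix.smul_mul]]
  congr 2
  ext i j
  fin_cases i <;> fin_cases j <;>
    simp [Matrix.mul_apply, Fin.sum_univ_two, Matrix.diagonal, Matrix.smul_apply, smul_eq_mul]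
  · field_simp
    ring
  · field_simp
    exact Or.inl (by ring)

end

end Stmt14Aux

/-- For constant invertible `M` with `det M = β̂ > 0`, the matrix
`g = M diag(μ⁺,μ⁻) Mᵀ` satisfies `det g = β̂² ρ²` and
`∂_ρ(ρ J_ρ) + ∂_z(ρ J_z) = 0` for `ρ > 0`, where `J_ρ = g⁻¹ ∂_ρ g`, `J_z = g⁻¹ ∂_z g`. -/
theorem stmt14 (M : Matrix (Fin 2) (Fin 2) ℝ) (a βh : ℝ) (hβ : 0 < βh)
    (hM : IsUnit M.det) (hdetM : M.det = βh) (ρ z : ℝ) (hρ : 0 < ρ) :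
    (rodGram M a ρ z).det = βh ^ 2 * ρ ^ 2 ∧
    deriv (fun s => s • ((rodGram M a s z)⁻¹ * deriv (fun s' => rodGram M a s' z) s)) ρ
      + deriv (fun t => ρ • ((rodGram M a ρ t)⁻¹ * deriv (fun t' => rodGram M a ρ t') t)) z
      = 0 := by
  open Stmt14Aux in
  constructor
  · have h2 : Real.sqrt (ρ ^ 2 + (z - a) ^ 2) ^ 2 = ρ ^ 2 + (z - a) ^ 2 :=
      Real.sq_sqrt (by positivity)
    simp only [rodGram, Matrix.det_mul, Matrix.det_transpose, Matrix.det_diagonal,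
      Fin.prod_univ_two, hdetM]
    simp only [Matrix.cons_val_zero, Matrix.cons_val_one, Matrix.head_cons]
    nlinarith [h2]
  · have hq : 0 < ρ ^ 2 + (z - a) ^ 2 := by positivity
    set w := z - a with hw
    set R := Real.sqrt (ρ ^ 2 + w ^ 2) with hRdef
    have hRpos : 0 < R := Real.sqrt_pos.mpr hq
    -- derivative of the first (ρ-direction) term
    have hFev : (fun s => s • ((rodGram M a s z)⁻¹ * deriv (fun s' => rodGram M a s' z) s))
        =ᶠ[nhds ρ] (fun s => Mᵀ⁻¹ * Matrix.diagonal
          ![1 + w * (Real.sqrt (s ^ 2 + w ^ 2))⁻¹,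
            1 - w * (Real.sqrt (s ^ 2 + w ^ 2))⁻¹] * Mᵀ) := by
      filter_upwards [Ioi_mem_nhds hρ] with s hs
      simpa [hw] using F_eq M a z hM (s := s) hs
    have hr : HasDerivAt (fun u : ℝ => Real.sqrt (u ^ 2 + w ^ 2)) (ρ / R) ρ :=
      hasDerivAt_sqrt_sq_add hq
    have h0 : HasDerivAt (fun s : ℝ => 1 + w * (Real.sqrt (s ^ 2 + w ^ 2))⁻¹)
        (w * (-(ρ / R) / R ^ 2)) ρ := ((hr.inv hRpos.ne').const_mul w).const_add 1
    have h1 : HasDerivAt (fun s : ℝ => 1 - w * (Real.sqrt (s ^ 2 + w ^ 2))⁻¹)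
        (-(w * (-(ρ / R) / R ^ 2))) ρ := HasDerivAt.const_sub 1 ((hr.inv hRpos.ne').const_mul w)
    have hF := (hasDerivAt_sandDiag (Mᵀ)⁻¹ Mᵀ h0 h1).deriv
    -- derivative of the second (z-direction) term
    have hGfun : (fun t => ρ • ((rodGram M a ρ t)⁻¹ * deriv (fun t' => rodGram M a ρ t') t))
        = (fun t => Mᵀ⁻¹ * Matrix.diagonal
          ![-(ρ * (Real.sqrt (ρ ^ 2 + (t - a) ^ 2))⁻¹),
            ρ * (Real.sqrt (ρ ^ 2 + (t - a) ^ 2))⁻¹] * Mᵀ) :=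
      funext fun t => G_eq M a hM hρ t
    have hrz : HasDerivAt (fun t : ℝ => Real.sqrt (ρ ^ 2 + (t - a) ^ 2)) (w / R) z := by
      simpa [← hw, ← hRdef] using hasDerivAt_sqrt_add_sq (c := ρ) (a := a) (t := z)
        (by rw [← hw]; exact hq)
    have g0 : HasDerivAt (fun t : ℝ => -(ρ * (Real.sqrt (ρ ^ 2 + (t - a) ^ 2))⁻¹))
        (-(ρ * (-(w / R) / R ^ 2))) z := ((hrz.inv hRpos.ne').const_mul ρ).neg
    have g1 : HasDerivAt (fun t : ℝ => ρ * (Real.sqrt (ρ ^ 2 + (t - a) ^ 2))⁻¹)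
        (ρ * (-(w / R) / R ^ 2)) z := (hrz.inv hRpos.ne').const_mul ρ
    have hG := (hasDerivAt_sandDiag (Mᵀ)⁻¹ Mᵀ g0 g1).deriv
    erw [hFev.deriv_eq, hGfun, hF, hG]
    have hz : Matrix.diagonal ![w * (-(ρ / R) / R ^ 2), -(w * (-(ρ / R) / R ^ 2))]
        + Matrix.diagonal ![-(ρ * (-(w / R) / R ^ 2)), ρ * (-(w / R) / R ^ 2)]
        = (0 : Matrix (Fin 2) (Fin 2) ℝ) := by
      ext i j
      fin_cases i <;> fin_cases j <;> simp [Matrix.diagonal] <;> ring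
    rw [← Matrix.add_mul, ← Matrix.mul_add, hz]
    simp
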